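/- Let {X_n} be i.i.d. random variables and ρ₂ = sup{r ≥ 0 : liminf_{x→∞} x^r P(X > x) = 0}. Then liminf_{n→∞} (log max_{1≤k≤n} X_k)/(log n) = 1/ρ₂ almost surely, with conventions 1/0 = ∞ and 1/∞ = 0. -/

import Mathlib

open MeasureTheory ProbabilityTheory Filter
open scoped ENNReal Topology

/-- `log x = ln (e ∨ x)` as in the paper. -/
noncomputable def Log (x : ℝ) : ℝ := Real.log (max (Real.exp 1) x)

/-- `pmax X n ω = max_{1 ≤ k ≤ n} X_k(ω)` (indexed `0,…,n-1`), junk value at `n = 0`. -/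
noncomputable def pmax {Ω : Type*} (X : ℕ → Ω → ℝ) (n : ℕ) (ω : Ω) : ℝ :=
  if h : n = 0 then X 0 ω
  else (Finset.range n).sup' (Finset.nonempty_range_iff.mpr h) fun k => X k ω

lemma one_le_Log (x : ℝ) : 1 ≤ Log x := by
  rw [Log]
  calc (1:ℝ) = Real.log (Real.exp 1) := by rw [Real.log_exp]
  _ ≤ _ := Real.log_le_log (Real.exp_pos 1) (le_max_left _ _)

lemma Log_pos (x : ℝ) : 0 < Log x := lt_of_lt_of_le one_pos (one_le_Log x)

lemma Log_mono {x y : ℝ} (h : x ≤ y) : Log x ≤ Log y :=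
  Real.log_le_log (lt_max_of_lt_left (Real.exp_pos 1)) (max_le_max le_rfl h)

lemma Log_of_ge {x : ℝ} (h : Real.exp 1 ≤ x) : Log x = Real.log x := by
  rw [Log, max_eq_right h]

lemma pmax_le_iff {Ω : Type*} {X : ℕ → Ω → ℝ} {n : ℕ} (hn : n ≠ 0) {ω : Ω} {x : ℝ} :
    pmax X n ω ≤ x ↔ ∀ k < n, X k ω ≤ x := by
  rw [pmax, dif_neg hn, Finset.sup'_le_iff]
  simp [Finset.mem_range]

lemma le_pmax {Ω : Type*} {X : ℕ → Ω → ℝ} {n k : ℕ} (hk : k < n) (ω : Ω) :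
    X k ω ≤ pmax X n ω := by
  rw [pmax, dif_neg (by omega : n ≠ 0)]
  exact Finset.le_sup' (fun k => X k ω) (Finset.mem_range.mpr hk)

lemma lemU {Ω : Type*} [MeasurableSpace Ω] (μ : Measure Ω) [IsProbabilityMeasure μ]
    (X : ℕ → Ω → ℝ) (hident : ∀ n, IdentDistrib (X n) (X 0) μ μ)
    (q : ℝ) (hq : 0 < q)
    (hT : Filter.liminf (fun x : ℝ => ENNReal.ofReal (x ^ q) * μ {ω | X 0 ω > x}) atTop = 0) :
    ∀ᵐ ω ∂μ, Filter.liminf (fun n : ℕ => ENNReal.ofReal (Log (pmax X n ω) / Log n)) atTop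
      ≤ ENNReal.ofReal (1 / q) := by
  have he1 : (1:ℝ) ≤ Real.exp 1 := by
    exact Real.one_le_exp zero_le_one
  -- choose a sparse sequence
  have hfreq : ∀ j : ℕ, ∃ x : ℝ, ((j:ℝ) ≤ x ∧ Real.exp 1 ≤ x) ∧
      ENNReal.ofReal (x ^ q) * μ {ω | X 0 ω > x} < (2:ℝ≥0∞)⁻¹ ^ j := by
    intro j
    have h1 : Filter.liminf (fun x : ℝ => ENNReal.ofReal (x ^ q) * μ {ω | X 0 ω > x}) atTop
        < (2:ℝ≥0∞)⁻¹ ^ j := by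
      rw [hT]; exact ENNReal.pow_pos (by simp) j
    exact ((((eventually_ge_atTop ((j:ℝ))).and (eventually_ge_atTop (Real.exp 1))).and_frequently
      (frequently_lt_of_liminf_lt (h := h1)))).exists
  choose x hx hxlt using hfreq
  have hxj : ∀ j : ℕ, (j:ℝ) ≤ x j := fun j => (hx j).1
  have hxe : ∀ j, Real.exp 1 ≤ x j := fun j => (hx j).2
  have hx1 : ∀ j, 1 ≤ x j := fun j => le_trans he1 (hxe j)
  have hx0 : ∀ j, 0 < x j := fun j => lt_of_lt_of_le one_pos (hx1 j)
  have hxq1 : ∀ j, 1 ≤ (x j) ^ q := by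
    intro j
    calc (1:ℝ) = 1 ^ q := (Real.one_rpow q).symm
    _ ≤ (x j) ^ q := Real.rpow_le_rpow zero_le_one (hx1 j) hq.le
  set n : ℕ → ℕ := fun j => ⌊(x j) ^ q⌋₊ with hn
  set s : ℕ → Set Ω := fun j => ⋃ k ∈ Finset.range (n j), {ω | x j < X k ω} with hs
  -- measure bound
  have hμs : ∀ j, μ (s j) ≤ (2:ℝ≥0∞)⁻¹ ^ j := by
    intro j
    have h1 : μ (s j) ≤ ∑ k ∈ Finset.range (n j), μ {ω | x j < X k ω} :=
      measure_biUnion_finset_le _ _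
    have h2 : ∀ k, μ {ω | x j < X k ω} = μ {ω | X 0 ω > x j} := by
      intro k
      have := (hident k).measure_mem_eq (s := Set.Ioi (x j)) measurableSet_Ioi
      simpa [Set.preimage, Set.mem_Ioi] using this
    have h3 : ∑ k ∈ Finset.range (n j), μ {ω | x j < X k ω}
        = (n j : ℝ≥0∞) * μ {ω | X 0 ω > x j} := by
      simp [h2, Finset.sum_const, nsmul_eq_mul]
    have h4 : (n j : ℝ≥0∞) ≤ ENNReal.ofReal ((x j) ^ q) := by
      rw [← ENNReal.ofReal_natCast]
      exact ENNReal.ofReal_le_ofReal (Nat.floor_le (Real.rpow_nonneg (hx0 j).le q))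
    calc μ (s j) ≤ (n j : ℝ≥0∞) * μ {ω | X 0 ω > x j} := h1.trans h3.le
    _ ≤ ENNReal.ofReal ((x j) ^ q) * μ {ω | X 0 ω > x j} :=
        mul_le_mul' h4 le_rfl
    _ ≤ (2:ℝ≥0∞)⁻¹ ^ j := (hxlt j).le
  have hsum : (∑' j, μ (s j)) ≠ ∞ := by
    have h1 : (∑' j, μ (s j)) ≤ ∑' j, (2:ℝ≥0∞)⁻¹ ^ j := ENNReal.tsum_le_tsum hμs
    rw [ENNReal.tsum_geometric] at h1
    refine ne_top_of_le_ne_top (ENNReal.inv_ne_top.mpr ?_) h1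
    have : (2:ℝ≥0∞)⁻¹ < 1 := ENNReal.inv_lt_one.mpr ENNReal.one_lt_two
    exact (tsub_pos_of_lt this).ne'
  -- tendsto facts
  have hxt : Tendsto x atTop atTop := tendsto_atTop_mono hxj tendsto_natCast_atTop_atTop
  have hxqt : Tendsto (fun j => (x j) ^ q) atTop atTop := (tendsto_rpow_atTop hq).comp hxt
  have hnt : Tendsto n atTop atTop := tendsto_nat_floor_atTop.comp hxqt
  have hlogt : Tendsto (fun j => Real.log (x j)) atTop atTop := Real.tendsto_log_atTop.comp hxt
  -- the limit of the comparison sequence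
  have hreal : Tendsto (fun j => Real.log (x j) / (q * Real.log (x j) - Real.log 2)) atTop
      (𝓝 (1 / q)) := by
    have h4 : Tendsto (fun t : ℝ => 1 / (q - Real.log 2 / t)) atTop (𝓝 (1 / q)) := by
      have h0 : Tendsto (fun t : ℝ => Real.log 2 / t) atTop (𝓝 0) :=
        tendsto_const_nhds.div_atTop tendsto_id
      have : Tendsto (fun t : ℝ => q - Real.log 2 / t) atTop (𝓝 q) := by
        have h1 := (tendsto_const_nhds (x := q) (f := atTop)).sub h0
        rwa [sub_zero] at h1
      exact tendsto_const_nhds.div this hq.ne'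
    have h5 : Tendsto (fun t : ℝ => t / (q * t - Real.log 2)) atTop (𝓝 (1 / q)) := by
      refine h4.congr' ?_
      filter_upwards [eventually_gt_atTop (0:ℝ),
        eventually_ge_atTop ((1 + Real.log 2)/q)] with t ht ht2
      have hd : (0:ℝ) < q * t - Real.log 2 := by
        have : 1 + Real.log 2 ≤ q * t := by
          rw [div_le_iff₀ hq] at ht2; linarith [ht2]
        linarith
      field_simp
    exact h5.comp hlogt
  have hliminfb : liminf
      (fun j => ENNReal.ofReal (Real.log (x j) / (q * Real.log (x j) - Real.log 2))) atTop
      = ENNReal.ofReal (1 / q) := (ENNReal.tendsto_ofReal hreal).liminf_eq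
  filter_upwards [ae_eventually_notMem hsum] with ω hω
  have key1 : liminf (fun m : ℕ => ENNReal.ofReal (Log (pmax X m ω) / Log m)) atTop
      ≤ liminf ((fun m : ℕ => ENNReal.ofReal (Log (pmax X m ω) / Log m)) ∘ n) atTop := by
    rw [liminf_comp]
    exact liminf_le_liminf_of_le hnt
  have key2 : liminf ((fun m : ℕ => ENNReal.ofReal (Log (pmax X m ω) / Log m)) ∘ n) atTop
      ≤ liminf (fun j => ENNReal.ofReal (Real.log (x j) / (q * Real.log (x j) - Real.log 2)))
        atTop := by
    refine liminf_le_liminf ?_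
    filter_upwards [hω, hxqt.eventually_ge_atTop 2, hnt.eventually_ge_atTop 3,
      hlogt.eventually_ge_atTop ((1 + Real.log 2) / q)] with j h1 h2 h3 h4
    have hm0 : n j ≠ 0 := by omega
    have hpm : pmax X (n j) ω ≤ x j := by
      rw [pmax_le_iff hm0]
      intro k hk
      by_contra hcon
      exact h1 (Set.mem_biUnion (Finset.mem_range.mpr hk) (by simp [not_le.mp hcon]))
    have hnum : Log (pmax X (n j) ω) ≤ Real.log (x j) :=
      (Log_mono hpm).trans_eq (Log_of_ge (hxe j))
    have hql : 1 + Real.log 2 ≤ q * Real.log (x j) := by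
      rw [div_le_iff₀ hq] at h4; linarith
    have hlog2 : (0:ℝ) ≤ Real.log 2 := Real.log_nonneg one_le_two
    have hd : 0 < q * Real.log (x j) - Real.log 2 := by linarith
    have he3 : Real.exp 1 ≤ 3 := by
      have := Real.exp_one_lt_d9
      linarith
    have hn3 : (3:ℝ) ≤ (n j : ℝ) := by exact_mod_cast h3
    have hfl : x j ^ q - 1 < (n j : ℝ) := Nat.sub_one_lt_floor (x j ^ q)
    have hhalf : x j ^ q / 2 ≤ (n j : ℝ) := by linarith
    have hden : q * Real.log (x j) - Real.log 2 ≤ Log ((n j : ℝ)) := by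
      rw [Log_of_ge (he3.trans hn3)]
      have h5 : Real.log (x j ^ q / 2) ≤ Real.log (n j) :=
        Real.log_le_log (by positivity) hhalf
      rwa [Real.log_div (by positivity) two_ne_zero, Real.log_rpow (hx0 j)] at h5
    show ENNReal.ofReal (Log (pmax X (n j) ω) / Log ((n j : ℕ) : ℝ))
      ≤ ENNReal.ofReal (Real.log (x j) / (q * Real.log (x j) - Real.log 2))
    exact ENNReal.ofReal_le_ofReal
      (div_le_div₀ (Real.log_nonneg (hx1 j)) hnum hd hden)
  exact (key1.trans key2).trans hliminfb.le

lemma lemD {Ω : Type*} [MeasurableSpace Ω] (μ : Measure Ω) [IsProbabilityMeasure μ]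
    (X : ℕ → Ω → ℝ) (hmeas : ∀ n, Measurable (X n))
    (hindep : iIndepFun X μ)
    (hident : ∀ n, IdentDistrib (X n) (X 0) μ μ)
    (q ε : ℝ) (hq : 0 < q) (hε0 : 0 < ε) (hε1 : ε < 1)
    (hT : Filter.liminf (fun x : ℝ => ENNReal.ofReal (x ^ q) * μ {ω | X 0 ω > x}) atTop ≠ 0) :
    ∀ᵐ ω ∂μ, ENNReal.ofReal ((1 - ε) / q)
      ≤ Filter.liminf (fun n : ℕ => ENNReal.ofReal (Log (pmax X n ω) / Log n)) atTop := by
  have hα : 0 < (1 - ε) / q := div_pos (by linarith) hq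
  set α := (1 - ε) / q with hαdef
  -- extract a positive lower bound on the tail
  set l := Filter.liminf (fun x : ℝ => ENNReal.ofReal (x ^ q) * μ {ω | X 0 ω > x}) atTop with hl
  have hlpos : 0 < l := pos_iff_ne_zero.mpr hT
  set b := min l 1 / 2 with hbdef
  have hminpos : (0:ℝ≥0∞) < min l 1 := lt_min hlpos zero_lt_one
  have hminne : min l 1 ≠ ⊤ := (lt_of_le_of_lt (min_le_right _ _) ENNReal.one_lt_top).ne
  have hblt : b < l := lt_of_lt_of_le (ENNReal.half_lt_self hminpos.ne' hminne) (min_le_left _ _)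
  have hbpos : 0 < b := ENNReal.div_pos hminpos.ne' (by norm_num)
  have hbne : b ≠ ⊤ := by
    rw [hbdef]
    exact (ENNReal.div_lt_top hminne (by norm_num)).ne
  set c := b.toReal with hcdef
  have hc : 0 < c := ENNReal.toReal_pos hbpos.ne' hbne
  obtain ⟨x₀, hx₀⟩ := eventually_atTop.mp (eventually_lt_of_lt_liminf hblt)
  -- tail lower bound
  have hp : ∀ y : ℝ, x₀ ≤ y → 1 ≤ y → c / y ^ q ≤ (μ {ω | X 0 ω > y}).toReal := by
    intro y h1 h2
    have hyq : (0:ℝ) < y ^ q := Real.rpow_pos_of_pos (by linarith) q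
    have hy := (hx₀ y h1).le
    have hofc : ENNReal.ofReal (c / y ^ q) ≤ μ {ω | X 0 ω > y} := by
      rw [ENNReal.ofReal_div_of_pos hyq]
      rw [ENNReal.div_le_iff_le_mul (Or.inl (by simp [hyq])) (Or.inl ENNReal.ofReal_ne_top)]
      rw [mul_comm]
      calc ENNReal.ofReal c = b := ENNReal.ofReal_toReal hbne
      _ ≤ _ := hy
    calc c / y ^ q = (ENNReal.ofReal (c / y ^ q)).toReal :=
        (ENNReal.toReal_ofReal (by positivity)).symm
    _ ≤ _ := ENNReal.toReal_mono (measure_ne_top μ _) hofc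
  -- distribution function facts
  have hcompl : ∀ y : ℝ, μ {ω | X 0 ω ≤ y} = 1 - μ {ω | X 0 ω > y} := by
    intro y
    have hms : MeasurableSet {ω | X 0 ω > y} := (hmeas 0) measurableSet_Ioi
    have h := prob_compl_eq_one_sub (μ := μ) hms
    rw [← h]
    congr 1
    ext ω
    simp [not_lt]
  have hG : ∀ y : ℝ, (μ {ω | X 0 ω ≤ y}).toReal = 1 - (μ {ω | X 0 ω > y}).toReal := by
    intro y
    rw [hcompl y, ENNReal.toReal_sub_of_le prob_le_one ENNReal.one_ne_top, ENNReal.toReal_one]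
  -- product formula
  set A : ℕ → Set Ω := fun m => ⋂ k ∈ Finset.range m, {ω | X k ω ≤ (m:ℝ) ^ α} with hA
  have hAm : ∀ m : ℕ, μ (A m) = μ {ω | X 0 ω ≤ (m:ℝ) ^ α} ^ m := by
    intro m
    have h1 : μ (⋂ k ∈ Finset.range m, X k ⁻¹' Set.Iic ((m:ℝ) ^ α))
        = ∏ k ∈ Finset.range m, μ (X k ⁻¹' Set.Iic ((m:ℝ) ^ α)) :=
      hindep.meas_biInter (fun k _ => ⟨Set.Iic ((m:ℝ) ^ α), measurableSet_Iic, rfl⟩)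
    calc μ (A m) = μ (⋂ k ∈ Finset.range m, X k ⁻¹' Set.Iic ((m:ℝ) ^ α)) := rfl
    _ = ∏ k ∈ Finset.range m, μ (X k ⁻¹' Set.Iic ((m:ℝ) ^ α)) := h1
    _ = ∏ _k ∈ Finset.range m, μ (X 0 ⁻¹' Set.Iic ((m:ℝ) ^ α)) :=
        Finset.prod_congr rfl
          (fun k _ => (hident k).measure_mem_eq measurableSet_Iic)
    _ = μ (X 0 ⁻¹' Set.Iic ((m:ℝ) ^ α)) ^ m := by
        rw [Finset.prod_const, Finset.card_range]
    _ = μ {ω | X 0 ω ≤ (m:ℝ) ^ α} ^ m := rfl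
  -- eventual bound on μ (A m)
  have hmα : Tendsto (fun m : ℕ => (m:ℝ) ^ α) atTop atTop :=
    (tendsto_rpow_atTop hα).comp tendsto_natCast_atTop_atTop
  have hlog : Tendsto (fun m : ℕ => Real.log m / (m:ℝ) ^ ε) atTop (𝓝 0) :=
    ((isLittleO_log_rpow_atTop hε0).tendsto_div_nhds_zero).comp tendsto_natCast_atTop_atTop
  have hbound : ∀ᶠ m : ℕ in atTop, μ (A m) ≤ ENNReal.ofReal (1 / (m:ℝ) ^ (2:ℝ)) := by
    filter_upwards [hmα.eventually_ge_atTop x₀, hmα.eventually_ge_atTop 1,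
      eventually_ge_atTop 1, hlog.eventually (gt_mem_nhds (half_pos hc))] with m h1 h2 h3 h4
    have hm0 : (0:ℝ) < m := by exact_mod_cast h3
    have hm1 : (1:ℝ) ≤ m := by exact_mod_cast h3
    set y := (m:ℝ) ^ α with hy
    have hyq : (0:ℝ) < y ^ q := Real.rpow_pos_of_pos (by linarith) q
    have hGle : (μ {ω | X 0 ω ≤ y}).toReal ≤ Real.exp (-(c / y ^ q)) := by
      rw [hG y]
      have := hp y h1 h2
      have h5 := Real.add_one_le_exp (-(c / y ^ q))
      linarith
    have hyqm : y ^ q = (m:ℝ) ^ (1 - ε) := by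
      rw [← Real.rpow_mul hm0.le]
      congr 1
      exact div_mul_cancel₀ (1 - ε) hq.ne'
    have harith : c / y ^ q * m = c * (m:ℝ) ^ ε := by
      have hmm : (m:ℝ) ^ ε * (m:ℝ) ^ (1 - ε) = (m:ℝ) := by
        rw [← Real.rpow_add hm0]
        norm_num
      rw [hyqm]
      field_simp
      nlinarith [hmm]
    have hexp : Real.exp (-(c / y ^ q)) ^ m = Real.exp (-(c * (m:ℝ) ^ ε)) := by
      rw [← Real.exp_nat_mul, mul_comm, harith.symm]
      ring_nf
    have h2log : 2 * Real.log m ≤ c * (m:ℝ) ^ ε := by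
      have hmε : (0:ℝ) < (m:ℝ) ^ ε := Real.rpow_pos_of_pos hm0 ε
      rw [div_lt_iff₀ hmε] at h4
      nlinarith
    have hfinal : Real.exp (-(c * (m:ℝ) ^ ε)) ≤ 1 / (m:ℝ) ^ (2:ℝ) := by
      have hrw : (1:ℝ) / (m:ℝ) ^ (2:ℝ) = Real.exp (-(2 * Real.log m)) := by
        rw [Real.rpow_def_of_pos hm0, one_div, ← Real.exp_neg, mul_comm]
      rw [hrw]
      exact Real.exp_le_exp.mpr (by nlinarith)
    calc μ (A m) = μ {ω | X 0 ω ≤ y} ^ m := hAm m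
    _ = ENNReal.ofReal ((μ {ω | X 0 ω ≤ y}).toReal) ^ m := by
        rw [ENNReal.ofReal_toReal (measure_ne_top μ _)]
    _ = ENNReal.ofReal ((μ {ω | X 0 ω ≤ y}).toReal ^ m) := by
        rw [ENNReal.ofReal_pow ENNReal.toReal_nonneg]
    _ ≤ ENNReal.ofReal (1 / (m:ℝ) ^ (2:ℝ)) := by
        apply ENNReal.ofReal_le_ofReal
        calc (μ {ω | X 0 ω ≤ y}).toReal ^ m ≤ Real.exp (-(c / y ^ q)) ^ m :=
            pow_le_pow_left₀ ENNReal.toReal_nonneg hGle m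
        _ = Real.exp (-(c * (m:ℝ) ^ ε)) := hexp
        _ ≤ 1 / (m:ℝ) ^ (2:ℝ) := hfinal
  obtain ⟨N, hN⟩ := eventually_atTop.mp hbound
  -- Borel-Cantelli on the shifted sequence
  have hsum : (∑' j : ℕ, μ (A (j + N))) ≠ ⊤ := by
    have hsummable : Summable (fun j : ℕ => 1 / ((j + N : ℕ):ℝ) ^ (2:ℝ)) := by
      have h0 : Summable (fun n : ℕ => 1 / (n:ℝ) ^ (2:ℝ)) :=
        Real.summable_one_div_nat_rpow.mpr (by norm_num)
      exact h0.comp_injective (add_left_injective N)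
    have h1 : (∑' j : ℕ, μ (A (j + N)))
        ≤ ∑' j : ℕ, ENNReal.ofReal (1 / ((j + N : ℕ):ℝ) ^ (2:ℝ)) :=
      ENNReal.tsum_le_tsum (fun j => hN (j + N) (by omega))
    rw [← ENNReal.ofReal_tsum_of_nonneg (fun j => by positivity) hsummable] at h1
    exact ne_top_of_le_ne_top ENNReal.ofReal_ne_top h1
  filter_upwards [ae_eventually_notMem hsum] with ω hω
  have hev2 : ∀ᶠ m : ℕ in atTop, ω ∉ A m := by
    obtain ⟨j₀, hj₀⟩ := eventually_atTop.mp hω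
    rw [eventually_atTop]
    refine ⟨j₀ + N, fun m hm => ?_⟩
    have h := hj₀ (m - N) (by omega)
    have : m - N + N = m := by omega
    rwa [this] at h
  refine le_liminf_of_le (by isBoundedDefault) ?_
  have he3 : Real.exp 1 ≤ 3 := by
    have := Real.exp_one_lt_d9
    linarith
  filter_upwards [hev2, hmα.eventually_ge_atTop (Real.exp 1), eventually_ge_atTop 3]
    with m h1 h2 h3
  have hm0 : (0:ℝ) < m := by
    have : (3:ℝ) ≤ m := by exact_mod_cast h3
    linarith
  -- from ω ∉ A m, get some k < m with X k ω > m^α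
  have hex : ∃ k < m, (m:ℝ) ^ α < X k ω := by
    by_contra hcon
    push_neg at hcon
    exact h1 (Set.mem_biInter (fun k hk => hcon k (Finset.mem_range.mp hk)))
  obtain ⟨k, hk, hgt⟩ := hex
  have hpm : (m:ℝ) ^ α < pmax X m ω := lt_of_lt_of_le hgt (le_pmax hk ω)
  have hlogm : Log ((m:ℝ)) = Real.log m := Log_of_ge (by
    calc Real.exp 1 ≤ 3 := he3
    _ ≤ (m:ℝ) := by exact_mod_cast h3)
  have hlogmpos : 0 < Real.log m := Real.log_pos (by
    have : (3:ℝ) ≤ m := by exact_mod_cast h3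
    linarith)
  have hnum : α * Real.log m ≤ Log (pmax X m ω) := by
    calc α * Real.log m = Real.log ((m:ℝ) ^ α) := (Real.log_rpow hm0 α).symm
    _ = Log ((m:ℝ) ^ α) := (Log_of_ge h2).symm
    _ ≤ Log (pmax X m ω) := Log_mono hpm.le
  apply ENNReal.ofReal_le_ofReal
  rw [hlogm]
  calc α = α * Real.log m / Real.log m := (mul_div_cancel_right₀ α hlogmpos.ne').symm
  _ ≤ Log (pmax X m ω) / Real.log m := by gcongr

lemma Tmono {Ω : Type*} [MeasurableSpace Ω] (μ : Measure Ω) (X : ℕ → Ω → ℝ)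
    {a b : ℝ} (ha : 0 ≤ a) (hab : a ≤ b) :
    Filter.liminf (fun x : ℝ => ENNReal.ofReal (x ^ a) * μ {ω | X 0 ω > x}) atTop
      ≤ Filter.liminf (fun x : ℝ => ENNReal.ofReal (x ^ b) * μ {ω | X 0 ω > x}) atTop := by
  refine liminf_le_liminf ?_
  filter_upwards [eventually_ge_atTop (1:ℝ)] with x hx
  exact mul_le_mul' (ENNReal.ofReal_le_ofReal (Real.rpow_le_rpow_of_exponent_le hx hab)) le_rfl


theorem stmt6 {Ω : Type*} [MeasurableSpace Ω] (μ : Measure Ω) [IsProbabilityMeasure μ]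
    (X : ℕ → Ω → ℝ) (hmeas : ∀ n, Measurable (X n))
    (hindep : iIndepFun X μ)
    (hident : ∀ n, IdentDistrib (X n) (X 0) μ μ)
    (ρ₂ : ℝ≥0∞)
    (hρ₂ : ρ₂ = sSup (ENNReal.ofReal '' {r : ℝ | 0 ≤ r ∧
        Filter.liminf (fun x : ℝ => ENNReal.ofReal (x ^ r) * μ {ω | X 0 ω > x}) atTop = 0})) :
    ∀ᵐ ω ∂μ,
      Filter.liminf (fun n : ℕ => ENNReal.ofReal (Log (pmax X n ω) / Log n)) atTop = ρ₂⁻¹ := by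
  have hU : ∀ q : ℚ, ∀ᵐ ω ∂μ, (0 < (q:ℝ) ∧ ENNReal.ofReal (q:ℝ) < ρ₂) →
      Filter.liminf (fun n : ℕ => ENNReal.ofReal (Log (pmax X n ω) / Log n)) atTop
        ≤ ENNReal.ofReal (1 / (q:ℝ)) := by
    intro q
    by_cases hc : 0 < (q:ℝ) ∧ ENNReal.ofReal (q:ℝ) < ρ₂
    · have hT0 : Filter.liminf
          (fun x : ℝ => ENNReal.ofReal (x ^ (q:ℝ)) * μ {ω | X 0 ω > x}) atTop = 0 := by
        obtain ⟨hq, hlt⟩ := hc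
        rw [hρ₂] at hlt
        obtain ⟨a, ⟨r, hr, rfl⟩, hlt2⟩ := lt_sSup_iff.mp hlt
        have hrq : (q:ℝ) ≤ r := by
          by_contra hcon
          exact absurd (ENNReal.ofReal_le_ofReal (not_le.mp hcon).le) (not_le.mpr hlt2)
        exact le_antisymm ((Tmono μ X hq.le hrq).trans_eq hr.2) zero_le
      filter_upwards [lemU μ X hident (q:ℝ) hc.1 hT0] with ω h _
      exact h
    · filter_upwards with ω h
      exact absurd h hc
  have hL : ∀ p : ℚ × ℕ, ∀ᵐ ω ∂μ,
      (0 < (p.1:ℝ) ∧ ρ₂ < ENNReal.ofReal (p.1:ℝ) ∧ 2 ≤ p.2) →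
      ENNReal.ofReal ((1 - 1/(p.2:ℝ)) / (p.1:ℝ))
        ≤ Filter.liminf (fun n : ℕ => ENNReal.ofReal (Log (pmax X n ω) / Log n)) atTop := by
    rintro ⟨q, m⟩
    by_cases hc : 0 < (q:ℝ) ∧ ρ₂ < ENNReal.ofReal (q:ℝ) ∧ 2 ≤ m
    · obtain ⟨hq, hlt, hm⟩ := hc
      have hTne : Filter.liminf
          (fun x : ℝ => ENNReal.ofReal (x ^ (q:ℝ)) * μ {ω | X 0 ω > x}) atTop ≠ 0 := by
        intro h0
        have hle : ENNReal.ofReal (q:ℝ) ≤ ρ₂ := by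
          rw [hρ₂]; exact le_sSup ⟨(q:ℝ), ⟨hq.le, h0⟩, rfl⟩
        exact absurd hle (not_le.mpr hlt)
      have hm0 : (0:ℝ) < m := by
        have : (2:ℝ) ≤ m := by exact_mod_cast hm
        linarith
      have hε0 : 0 < 1/(m:ℝ) := by positivity
      have hε1 : 1/(m:ℝ) < 1 := by
        rw [div_lt_one hm0]
        have : (2:ℝ) ≤ m := by exact_mod_cast hm
        linarith
      filter_upwards [lemD μ X hmeas hindep hident (q:ℝ) (1/(m:ℝ)) hq hε0 hε1 hTne] with ω h _
      exact h
    · filter_upwards with ω h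
      exact absurd h hc
  filter_upwards [(MeasureTheory.ae_all_iff).mpr hU, (MeasureTheory.ae_all_iff).mpr hL]
    with ω hUω hLω
  set L := Filter.liminf (fun n : ℕ => ENNReal.ofReal (Log (pmax X n ω) / Log n)) atTop
    with hLdef
  refine le_antisymm ?_ ?_
  · -- L ≤ ρ₂⁻¹
    by_cases h0 : ρ₂ = 0
    · rw [h0]; simp
    · have key : ρ₂ ≤ L⁻¹ := by
        refine le_of_forall_lt ?_
        intro d hd
        have hdne : d ≠ ⊤ := (hd.trans_le le_top).ne
        rw [hρ₂] at hd
        obtain ⟨a, ⟨r, hr, rfl⟩, hlt2⟩ := lt_sSup_iff.mp hd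
        have hrpos : 0 < r := ENNReal.ofReal_pos.mp ((show (0:ℝ≥0∞) ≤ d from zero_le).trans_lt hlt2)
        have hdt : d.toReal < r := (ENNReal.lt_ofReal_iff_toReal_lt hdne).mp hlt2
        obtain ⟨q, hq1, hq2⟩ := exists_rat_btwn hdt
        have hq0 : 0 < (q:ℝ) := lt_of_le_of_lt ENNReal.toReal_nonneg hq1
        have hofq : ENNReal.ofReal (q:ℝ) < ρ₂ := by
          rw [hρ₂]
          exact lt_of_lt_of_le ((ENNReal.ofReal_lt_ofReal_iff hrpos).mpr hq2)
            (le_sSup ⟨r, hr, rfl⟩)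
        have hLq : L ≤ ENNReal.ofReal (1/(q:ℝ)) := hUω q ⟨hq0, hofq⟩
        have h2 : ENNReal.ofReal (1/(q:ℝ)) = (ENNReal.ofReal (q:ℝ))⁻¹ := by
          rw [one_div, ENNReal.ofReal_inv_of_pos hq0]
        have h3 : ENNReal.ofReal (q:ℝ) ≤ L⁻¹ := by
          have h4 := ENNReal.inv_le_inv.mpr (h2 ▸ hLq)
          rwa [inv_inv] at h4
        exact lt_of_lt_of_le ((ENNReal.lt_ofReal_iff_toReal_lt hdne).mpr hq1) h3
      have h5 := ENNReal.inv_le_inv.mpr key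
      rwa [inv_inv] at h5
  · -- ρ₂⁻¹ ≤ L
    by_cases htop : ρ₂ = ⊤
    · rw [htop]; simp
    · refine le_of_forall_lt ?_
      intro b hb
      have hbne : b ≠ ⊤ := (hb.trans_le le_top).ne
      set t := b.toReal with htdef
      set s := ρ₂.toReal with hsdef
      have ht0 : 0 ≤ t := ENNReal.toReal_nonneg
      have hs0 : 0 ≤ s := ENNReal.toReal_nonneg
      have hst : t * s < 1 := by
        rcases eq_or_ne ρ₂ 0 with h0 | h0
        · rw [hsdef, h0]; simp
        · have hρfin : ρ₂⁻¹ ≠ ⊤ := ENNReal.inv_ne_top.mpr h0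
          have hbt : t < (ρ₂⁻¹).toReal :=
            (ENNReal.toReal_lt_toReal hbne hρfin).mpr hb
          rw [ENNReal.toReal_inv] at hbt
          have hρpos : 0 < s := ENNReal.toReal_pos h0 htop
          calc t * s < s⁻¹ * s := mul_lt_mul_of_pos_right hbt hρpos
          _ = 1 := inv_mul_cancel₀ hρpos.ne'
      have hδ : 0 < (1 - t*s)/(t+1) := div_pos (by linarith) (by linarith)
      obtain ⟨q, hq1, hq2⟩ := exists_rat_btwn (lt_add_of_pos_right s hδ)
      have hq0 : 0 < (q:ℝ) := lt_of_le_of_lt hs0 hq1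
      have htq : t * (q:ℝ) < 1 := by
        rcases eq_or_lt_of_le ht0 with h | h
        · rw [← h]; simp
        · have h7 : (q:ℝ) - s < (1 - t*s)/(t+1) := by linarith
          have h8 : t * ((q:ℝ) - s) < t * ((1 - t*s)/(t+1)) := mul_lt_mul_of_pos_left h7 h
          have h9 : t * ((1 - t*s)/(t+1)) ≤ 1 - t*s := by
            rw [mul_div_assoc', div_le_iff₀ (by linarith : (0:ℝ) < t + 1)]
            nlinarith
          nlinarith
      obtain ⟨m0, hm0⟩ := exists_nat_one_div_lt (by linarith : (0:ℝ) < 1 - t * q)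
      set m : ℕ := m0 + 2 with hmdef
      have hmge : 1/(m:ℝ) ≤ 1/((m0:ℝ) + 1) := by
        apply one_div_le_one_div_of_le (by positivity)
        rw [hmdef]; push_cast; linarith
      have hmlt : 1/(m:ℝ) < 1 - t * q := lt_of_le_of_lt hmge hm0
      have hofq : ρ₂ < ENNReal.ofReal (q:ℝ) :=
        (ENNReal.lt_ofReal_iff_toReal_lt htop).mpr hq1
      have hLb : ENNReal.ofReal ((1 - 1/(m:ℝ)) / (q:ℝ)) ≤ L := hLω (q, m) ⟨hq0, hofq, by omega⟩
      refine lt_of_lt_of_le ?_ hLb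
      rw [ENNReal.lt_ofReal_iff_toReal_lt hbne]
      rw [lt_div_iff₀ hq0]
      linarith
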